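/- For all graphs G and H, the walk-nonrepetitive chromatic number of the strong product satisfies σ(G ⊠ H) ≤ σ(G) · σ(H). -/

import Mathlib

/-- The strong product `G ⊠ H`. -/
def StrongProd {V W : Type*} (G : SimpleGraph V) (H : SimpleGraph W) :
    SimpleGraph (V × W) where
  Adj p q := p ≠ q ∧ (p.1 = q.1 ∨ G.Adj p.1 q.1) ∧ (p.2 = q.2 ∨ H.Adj p.2 q.2)
  symm := by
    constructor
    rintro p q ⟨hne, h1, h2⟩
    exact ⟨hne.symm, h1.imp Eq.symm SimpleGraph.Adj.symm,
      h2.imp Eq.symm SimpleGraph.Adj.symm⟩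
  loopless := by constructor; rintro p ⟨hne, -, -⟩; exact hne rfl

/-- `v 0, …, v (n-1)` is a walk in `G`. -/
def IsWalkSeq {V : Type*} (G : SimpleGraph V) (n : ℕ) (v : ℕ → V) : Prop :=
  ∀ i, i + 1 < n → G.Adj (v i) (v (i + 1))

/-- A colouring is walk-nonrepetitive if every repetitively coloured walk is boring. -/
def WalkNonrepetitive {V C : Type*} (G : SimpleGraph V) (φ : V → C) : Prop :=
  ∀ t : ℕ, 0 < t → ∀ v : ℕ → V, IsWalkSeq G (2 * t) v →
    (∀ i < t, φ (v i) = φ (v (t + i))) → ∀ i < t, v i = v (t + i)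


/-- Adjacent vertices get distinct colours. -/
lemma WalkNonrepetitive.proper {V C : Type*} {G : SimpleGraph V} {φ : V → C}
    (h : WalkNonrepetitive G φ) {x y : V} (hxy : G.Adj x y) : φ x ≠ φ y := by
  intro he
  have := h 1 one_pos (fun i => if i = 0 then x else y)
    (by intro i hi
        have h0 : i = 0 := by omega
        subst h0; simpa using hxy)
    (by intro i hi
        have h0 : i = 0 := by omega
        subst h0; simpa using he) 0 one_pos
  simp at this
  exact hxy.ne this

/-- Two neighbours of a common vertex with the same colour coincide. -/
lemma WalkNonrepetitive.square {V C : Type*} {G : SimpleGraph V} {φ : V → C}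
    (h : WalkNonrepetitive G φ) {c x y : V} (hx : G.Adj c x) (hy : G.Adj c y)
    (hφ : φ x = φ y) : x = y := by
  have := h 2 two_pos (fun i => if i = 0 then x else if i = 2 then y else c)
    (by intro i hi
        have : i = 0 ∨ i = 1 ∨ i = 2 := by omega
        rcases this with rfl | rfl | rfl <;> simp [hx.symm, hy, hy.symm])
    (by intro i hi
        have : i = 0 ∨ i = 1 := by omega
        rcases this with rfl | rfl <;> simp [hφ]) 0 two_pos
  simpa using this

def IsLazyWalkSeq {V : Type*} (G : SimpleGraph V) (n : ℕ) (v : ℕ → V) : Prop :=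
  ∀ i, i + 1 < n → v i = v (i + 1) ∨ G.Adj (v i) (v (i + 1))

lemma lazy_nonrep {V C : Type*} {G : SimpleGraph V} {φ : V → C}
    (h : WalkNonrepetitive G φ) :
    ∀ t : ℕ, 0 < t → ∀ v : ℕ → V, IsLazyWalkSeq G (2 * t) v →
      (∀ i < t, φ (v i) = φ (v (t + i))) → ∀ i < t, v i = v (t + i) := by
  intro t
  induction t using Nat.strong_induction_on with
  | _ t IH =>
  intro ht v hw hc
  by_cases hstay : ∃ i, i + 1 < t ∧ v i = v (i + 1)
  · obtain ⟨i, hi, hvi⟩ := hstay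
    have ht2 : 2 ≤ t := by omega
    -- corresponding stay in the second half
    have hvt : v (t + i) = v (t + i + 1) := by
      rcases hw (t + i) (by omega) with he | ha
      · exact he
      · exfalso
        refine h.proper ha ?_
        rw [← hc i (by omega), show t + i + 1 = t + (i+1) from rfl,
          ← hc (i+1) (by omega), hvi]
    -- delete indices i+1 and t+i+1
    set v' : ℕ → V := fun j =>
      if j ≤ i then v j else if j < t + i then v (j+1) else v (j+2) with hv'
    have hv'eq : ∀ j, (j ≤ i → v' j = v j) ∧ (i < j → j < t + i → v' j = v (j+1)) ∧
        (t + i ≤ j → v' j = v (j+2)) := by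
      intro j
      refine ⟨fun hj => ?_, fun hj1 hj2 => ?_, fun hj => ?_⟩ <;>
        simp only [hv'] <;> split_ifs <;> first | rfl | omega
    have key := IH (t-1) (by omega) (by omega) v'
      (by intro j hj
          rcases Nat.lt_or_ge (j+1) (t+i) with hj1 | hj1
          · rcases Nat.lt_or_ge j i with hj2 | hj2
            · rw [(hv'eq j).1 (by omega), (hv'eq (j+1)).1 (by omega)]
              exact hw j (by omega)
            · rcases eq_or_lt_of_le hj2 with hj3 | hj2
              · rw [(hv'eq j).1 (by omega), (hv'eq (j+1)).2.1 (by omega) (by omega),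
                  show j = i from hj3.symm, hvi]
                exact hw (i+1) (by omega)
              · rw [(hv'eq j).2.1 (by omega) (by omega),
                  (hv'eq (j+1)).2.1 (by omega) (by omega)]
                exact hw (j+1) (by omega)
          · rcases eq_or_lt_of_le hj1 with hj1 | hj1
            · rw [(hv'eq j).2.1 (by omega) (by omega), (hv'eq (j+1)).2.2 (by omega),
                show j + 1 = t + i from hj1.symm, hvt]
              exact hw (t+i+1) (by omega)
            · rw [(hv'eq j).2.2 (by omega), (hv'eq (j+1)).2.2 (by omega)]
              exact hw (j+2) (by omega))
      (by intro j hj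
          rcases le_or_gt j i with hj1 | hj1
          · rw [(hv'eq j).1 hj1, (hv'eq (t-1+j)).2.1 (by omega) (by omega),
              show t - 1 + j + 1 = t + j by omega]
            exact hc j (by omega)
          · rw [(hv'eq j).2.1 hj1 (by omega), (hv'eq (t-1+j)).2.2 (by omega),
              show t - 1 + j + 2 = t + (j+1) by omega]
            exact hc (j+1) (by omega))
    intro j hj
    rcases le_or_gt j i with hj1 | hj1
    · have := key j (by omega)
      rwa [(hv'eq j).1 hj1, (hv'eq (t-1+j)).2.1 (by omega) (by omega),
        show t - 1 + j + 1 = t + j by omega] at this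
    · rcases eq_or_lt_of_le (show i + 1 ≤ j from hj1) with rfl | hj1
      · -- j = i+1
        have := key i (by omega)
        rw [(hv'eq i).1 le_rfl, (hv'eq (t-1+i)).2.1 (by omega) (by omega),
          show t - 1 + i + 1 = t + i by omega] at this
        rw [← hvi, this, show t + (i+1) = t + i + 1 from rfl, ← hvt]
      · have := key (j-1) (by omega)
        rwa [(hv'eq (j-1)).2.1 (by omega) (by omega), show j - 1 + 1 = j by omega,
          (hv'eq (t-1+(j-1))).2.2 (by omega),
          show t - 1 + (j-1) + 2 = t + j by omega] at this
  · -- no stay in the first half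
    push_neg at hstay
    have hadj1 : ∀ i, i + 1 < t → G.Adj (v i) (v (i+1)) := by
      intro i hi
      rcases hw i (by omega) with he | ha
      · exact absurd he (hstay i hi)
      · exact ha
    have hadj2 : ∀ i, i + 1 < t → G.Adj (v (t+i)) (v (t+i+1)) := by
      intro i hi
      rcases hw (t+i) (by omega) with he | ha
      · exfalso
        refine h.proper (hadj1 i hi) ?_
        rw [hc i (by omega), he, show t + i + 1 = t + (i+1) from rfl,
          ← hc (i+1) (by omega)]
      · exact ha
    rcases hw (t-1) (by omega) with hmid | hmid
    · -- middle step is a stay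
      rcases eq_or_lt_of_le (show 1 ≤ t from ht) with h1 | ht2
      · intro i hi
        have : i = 0 := by omega
        subst this
        simpa [← h1] using hmid
      · -- t ≥ 2 : drop indices t-1 and 2t-1
        rw [show t - 1 + 1 = t by omega] at hmid
        set w : ℕ → V := fun j => if j < t - 1 then v j else v (j+1) with hwdef
        have hweq : ∀ j, (j < t - 1 → w j = v j) ∧ (t - 1 ≤ j → w j = v (j+1)) := by
          intro j
          constructor <;> intro hj <;> simp only [hwdef] <;>
            split_ifs <;> first | rfl | omega
        have key := h (t-1) (by omega) w
          (by intro j hj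
              rcases Nat.lt_or_ge (j+1) (t-1) with hj1 | hj1
              · rw [(hweq j).1 (by omega), (hweq (j+1)).1 hj1]
                exact hadj1 j (by omega)
              · rcases eq_or_lt_of_le hj1 with hj1 | hj1
                · rw [(hweq j).1 (by omega), (hweq (j+1)).2 (by omega),
                    show j + 1 + 1 = t by omega, ← hmid, show j = t - 2 by omega]
                  have := hadj1 (t-2) (by omega)
                  rwa [show t - 2 + 1 = t - 1 by omega] at this
                · rw [(hweq j).2 (by omega), (hweq (j+1)).2 (by omega)]
                  have := hadj2 (j+1-t) (by omega)
                  rwa [show t + (j+1-t) = j + 1 by omega] at this)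
          (by intro j hj
              rw [(hweq j).1 hj, (hweq (t-1+j)).2 (by omega),
                show t - 1 + j + 1 = t + j by omega]
              exact hc j (by omega))
        have hkey : ∀ j, j < t - 1 → v j = v (t + j) := by
          intro j hj
          have := key j hj
          rwa [(hweq j).1 hj, (hweq (t-1+j)).2 (by omega),
            show t - 1 + j + 1 = t + j by omega] at this
        intro i hi
        rcases Nat.lt_or_ge i (t-1) with hi1 | hi1
        · exact hkey i hi1
        · have hieq : i = t - 1 := by omega
          subst hieq
          -- show v (t-1) = v (2t-1) via the square lemma at v (t-2)
          have h1 : G.Adj (v (t-2)) (v (t-1)) := by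
            have := hadj1 (t-2) (by omega)
            rwa [show t - 2 + 1 = t - 1 by omega] at this
          have h2 : G.Adj (v (t-2)) (v (t + (t-1))) := by
            have := hadj2 (t-2) (by omega)
            rwa [show t + (t-2) + 1 = t + (t-1) by omega,
              ← hkey (t-2) (by omega)] at this
          exact h.square h1 h2 (hc (t-1) (by omega))
    · -- middle step adjacent: genuine walk
      refine h t ht v ?_ hc
      intro i hi
      rcases Nat.lt_or_ge (i+1) t with hi1 | hi1
      · exact hadj1 i hi1
      · rcases eq_or_lt_of_le hi1 with hi1 | hi1
        · rw [show i = t - 1 by omega]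
          exact hmid
        · have := hadj2 (i-t) (by omega)
          rwa [show t + (i-t) = i by omega] at this


/-- `σ(G ⊠ H) ≤ σ(G) · σ(H)`: from walk-nonrepetitive colourings of `G` and `H`
with `a` and `b` colours one obtains a walk-nonrepetitive colouring of `G ⊠ H`
with `a·b` colours. -/
theorem sigma_strongProd_le {V W : Type*} (G : SimpleGraph V) (H : SimpleGraph W)
    (a b : ℕ)
    (hG : ∃ φ : V → Fin a, WalkNonrepetitive G φ)
    (hH : ∃ ψ : W → Fin b, WalkNonrepetitive H ψ) :
    ∃ χ : V × W → Fin (a * b), WalkNonrepetitive (StrongProd G H) χ := by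
  obtain ⟨φ, hφ⟩ := hG
  obtain ⟨ψ, hψ⟩ := hH
  refine ⟨fun p => finProdFinEquiv (φ p.1, ψ p.2), ?_⟩
  intro t ht v hw hc
  have hc' : ∀ i < t, φ (v i).1 = φ (v (t + i)).1 ∧ ψ (v i).2 = ψ (v (t + i)).2 := by
    intro i hi
    have h1 := finProdFinEquiv.injective (hc i hi)
    exact ⟨congrArg Prod.fst h1, congrArg Prod.snd h1⟩
  have hw1 : IsLazyWalkSeq G (2 * t) (fun i => (v i).1) := by
    intro j hj; exact (hw j hj).2.1
  have hw2 : IsLazyWalkSeq H (2 * t) (fun i => (v i).2) := by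
    intro j hj; exact (hw j hj).2.2
  intro i hi
  have h1 := lazy_nonrep hφ t ht (fun i => (v i).1) hw1 (fun i hi => (hc' i hi).1) i hi
  have h2 := lazy_nonrep hψ t ht (fun i => (v i).2) hw2 (fun i hi => (hc' i hi).2) i hi
  exact Prod.ext h1 h2
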